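/- Let Λ̄ = diag(λ_2,...,λ_n) with λ_i > 0 be the diagonal matrix of nonzero Laplacian eigenvalues, and let X̄ > 0 solve −Λ̄X̄ − X̄Λ̄ + F̄F̄ᵀ = 0 and Ȳ > 0 (block-diagonal conforming to repeated eigenvalues of Λ̄) satisfy −Λ̄Ȳ − ȲΛ̄ + H̄ᵀH̄ ≤ 0. If K_M > 0 satisfies AᵀK_M + K_M A ≤ 0, Cᵀ = K_M B, and K_m > 0 likewise, then 𝒳 := X̄ ⊗ K_M^{-1} and 𝒴 := Ȳ ⊗ K_m are generalized controllability and observability Gramians of the system (I⊗A − Λ̄⊗BC, F̄⊗B, H̄⊗C), i.e., (I⊗A − Λ̄⊗BC)𝒳 + 𝒳(I⊗A − Λ̄⊗BC)ᵀ + (F̄⊗B)(F̄⊗B)ᵀ ≤ 0 and (I⊗A − Λ̄⊗BC)ᵀ𝒴 + 𝒴(I⊗A − Λ̄⊗BC) + (H̄⊗C)ᵀ(H̄⊗C) ≤ 0. -/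

import Mathlib

open Matrix Kronecker

lemma kron_neg_left {l m n o : Type*} (M : Matrix l m ℝ) (P : Matrix n o ℝ) :
    (-M) ⊗ₖ P = -(M ⊗ₖ P) := by
  ext ⟨i, j⟩ ⟨k, r⟩; simp

lemma kron_neg_right {l m n o : Type*} (M : Matrix l m ℝ) (P : Matrix n o ℝ) :
    M ⊗ₖ (-P) = -(M ⊗ₖ P) := by
  ext ⟨i, j⟩ ⟨k, r⟩; simp

lemma kron_sub_left {l m n o : Type*} (M M' : Matrix l m ℝ) (P : Matrix n o ℝ) :
    (M - M') ⊗ₖ P = M ⊗ₖ P - M' ⊗ₖ P := by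
  ext ⟨i, j⟩ ⟨k, r⟩; simp [sub_mul]

open scoped MatrixOrder in
lemma kron_psd_aux {n m : Type*} [Fintype n] [Fintype m]
    {M : Matrix n n ℝ} {P : Matrix m m ℝ}
    (hM : M.PosSemidef) (hP : P.PosSemidef) : (M ⊗ₖ P).PosSemidef := by
  classical
  obtain ⟨B1, h1⟩ := CStarAlgebra.nonneg_iff_eq_star_mul_self.mp hM.nonneg
  obtain ⟨B2, h2⟩ := CStarAlgebra.nonneg_iff_eq_star_mul_self.mp hP.nonneg
  have : M ⊗ₖ P = (B1 ⊗ₖ B2)ᴴ * (B1 ⊗ₖ B2) := by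
    rw [h1, h2, Matrix.mul_kronecker_mul]
    congr 1
  rw [this]
  exact Matrix.posSemidef_conjTranspose_mul_self _

lemma transpose_mul_self_psd {m n : Type*} [Fintype m] [Fintype n]
    (C : Matrix m n ℝ) : (Cᵀ * C).PosSemidef := by
  have h : Cᵀ = Cᴴ := by ext i j; simp [Matrix.conjTranspose_apply]
  rw [h]
  exact Matrix.posSemidef_conjTranspose_mul_self C

/-- For a positive diagonal `Λ̄` of nonzero Laplacian eigenvalues, `X̄ > 0` solving
`−Λ̄X̄ − X̄Λ̄ + F̄F̄ᵀ = 0`, and block-diagonal `Ȳ > 0` (conforming to the repeated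
eigenvalues of `Λ̄`) with `−Λ̄Ȳ − ȲΛ̄ + H̄ᵀH̄ ≤ 0`, and passivity certificates
`K_M, K_m` of `(A,B,C)`, the matrices `𝒳 = X̄ ⊗ K_M⁻¹` and `𝒴 = Ȳ ⊗ K_m` are
generalized controllability and observability Gramians of
`(I ⊗ A − Λ̄ ⊗ BC, F̄ ⊗ B, H̄ ⊗ C)`. -/
theorem network_generalized_gramians {N p q ℓ mm : ℕ}
    (lam : Fin N → ℝ) (hlam : ∀ i, 0 < lam i)
    (F : Matrix (Fin N) (Fin p) ℝ) (H : Matrix (Fin q) (Fin N) ℝ)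
    (A : Matrix (Fin ℓ) (Fin ℓ) ℝ)
    (B : Matrix (Fin ℓ) (Fin mm) ℝ) (C : Matrix (Fin mm) (Fin ℓ) ℝ)
    (KM Km : Matrix (Fin ℓ) (Fin ℓ) ℝ)
    (hKM : KM.PosDef) (hKMsym : KMᵀ = KM)
    (hKMlyap : (-(Aᵀ * KM + KM * A)).PosSemidef) (hKMCB : Cᵀ = KM * B)
    (hKm : Km.PosDef) (hKmsym : Kmᵀ = Km)
    (hKmlyap : (-(Aᵀ * Km + Km * A)).PosSemidef) (hKmCB : Cᵀ = Km * B)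
    (X Y : Matrix (Fin N) (Fin N) ℝ)
    (hX : X.PosDef) (hXsym : Xᵀ = X)
    (hY : Y.PosDef) (hYsym : Yᵀ = Y)
    (hYblock : ∀ i j, Y i j ≠ 0 → lam i = lam j)
    (hXeq : -(Matrix.diagonal lam * X) - X * Matrix.diagonal lam + F * Fᵀ = 0)
    (hYineq : (Matrix.diagonal lam * Y + Y * Matrix.diagonal lam - Hᵀ * H).PosSemidef) :
    (-(((1 : Matrix (Fin N) (Fin N) ℝ) ⊗ₖ A - Matrix.diagonal lam ⊗ₖ (B * C)) * (X ⊗ₖ KM⁻¹)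
        + (X ⊗ₖ KM⁻¹) * ((1 : Matrix (Fin N) (Fin N) ℝ) ⊗ₖ A - Matrix.diagonal lam ⊗ₖ (B * C))ᵀ
        + (F ⊗ₖ B) * (F ⊗ₖ B)ᵀ)).PosSemidef ∧
    (-(((1 : Matrix (Fin N) (Fin N) ℝ) ⊗ₖ A - Matrix.diagonal lam ⊗ₖ (B * C))ᵀ * (Y ⊗ₖ Km)
        + (Y ⊗ₖ Km) * ((1 : Matrix (Fin N) (Fin N) ℝ) ⊗ₖ A - Matrix.diagonal lam ⊗ₖ (B * C))
        + (H ⊗ₖ C)ᵀ * (H ⊗ₖ C))).PosSemidef := by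
  set D := Matrix.diagonal lam with hD
  have hKMdet : IsUnit KM.det := hKM.det_pos.ne'.isUnit
  have hKMinv : KM * KM⁻¹ = 1 := Matrix.mul_nonsing_inv KM hKMdet
  have hKMinv' : KM⁻¹ * KM = 1 := Matrix.nonsing_inv_mul KM hKMdet
  have hC_M : C = Bᵀ * KM := by
    have := congrArg Matrix.transpose hKMCB
    simpa [Matrix.transpose_mul, hKMsym] using this
  have hC_m : C = Bᵀ * Km := by
    have := congrArg Matrix.transpose hKmCB
    simpa [Matrix.transpose_mul, hKmsym] using this
  have hKMinvsym : (KM⁻¹)ᵀ = KM⁻¹ := by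
    rw [Matrix.transpose_nonsing_inv, hKMsym]
  have hDsym : Dᵀ = D := by rw [hD]; exact Matrix.diagonal_transpose lam
  have htrans : (((1 : Matrix (Fin N) (Fin N) ℝ) ⊗ₖ A - D ⊗ₖ (B * C)))ᵀ
      = (1 : Matrix (Fin N) (Fin N) ℝ) ⊗ₖ Aᵀ - D ⊗ₖ (Cᵀ * Bᵀ) := by
    rw [Matrix.transpose_sub, ← Matrix.kroneckerMap_transpose, ← Matrix.kroneckerMap_transpose,
      Matrix.transpose_one, Matrix.transpose_mul, hDsym]
  constructor
  · -- controllability Gramian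
    have hBCK : B * C * KM⁻¹ = B * Bᵀ := by
      rw [hC_M, Matrix.mul_assoc, Matrix.mul_assoc, hKMinv, Matrix.mul_one]
    have hKCB : KM⁻¹ * (Cᵀ * Bᵀ) = B * Bᵀ := by
      rw [hKMCB, ← Matrix.mul_assoc, ← Matrix.mul_assoc, hKMinv', Matrix.one_mul]
    have hFB : (F ⊗ₖ B) * (F ⊗ₖ B)ᵀ = (F * Fᵀ) ⊗ₖ (B * Bᵀ) := by
      rw [← Matrix.kroneckerMap_transpose, ← Matrix.mul_kronecker_mul]
    have key : ((1 : Matrix (Fin N) (Fin N) ℝ) ⊗ₖ A - D ⊗ₖ (B * C)) * (X ⊗ₖ KM⁻¹)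
        + (X ⊗ₖ KM⁻¹) * ((1 : Matrix (Fin N) (Fin N) ℝ) ⊗ₖ A - D ⊗ₖ (B * C))ᵀ
        + (F ⊗ₖ B) * (F ⊗ₖ B)ᵀ
        = X ⊗ₖ (A * KM⁻¹ + KM⁻¹ * Aᵀ) := by
      rw [htrans, Matrix.sub_mul, Matrix.mul_sub, hFB,
        ← Matrix.mul_kronecker_mul, ← Matrix.mul_kronecker_mul,
        ← Matrix.mul_kronecker_mul, ← Matrix.mul_kronecker_mul,
        Matrix.one_mul, Matrix.mul_one, hBCK, hKCB]
      have expand : X ⊗ₖ (A * KM⁻¹) - (D * X) ⊗ₖ (B * Bᵀ)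
          + (X ⊗ₖ (KM⁻¹ * Aᵀ) - (X * D) ⊗ₖ (B * Bᵀ)) + (F * Fᵀ) ⊗ₖ (B * Bᵀ)
          = X ⊗ₖ (A * KM⁻¹ + KM⁻¹ * Aᵀ)
            + (-(D * X) - X * D + F * Fᵀ) ⊗ₖ (B * Bᵀ) := by
        rw [Matrix.kronecker_add, Matrix.add_kronecker, kron_sub_left, kron_neg_left]
        abel
      rw [expand, hXeq, Matrix.zero_kronecker, add_zero]
    rw [key]
    have hS : (-(A * KM⁻¹ + KM⁻¹ * Aᵀ)).PosSemidef := by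
      have heq : -(A * KM⁻¹ + KM⁻¹ * Aᵀ) = KM⁻¹ * -(Aᵀ * KM + KM * A) * KM⁻¹ := by
        rw [Matrix.mul_neg, Matrix.neg_mul]
        congr 1
        rw [Matrix.mul_add, Matrix.add_mul, ← Matrix.mul_assoc KM⁻¹ Aᵀ KM,
          Matrix.mul_assoc (KM⁻¹ * Aᵀ) KM KM⁻¹, hKMinv, Matrix.mul_one,
          ← Matrix.mul_assoc KM⁻¹ KM A, hKMinv', Matrix.one_mul, add_comm]
      rw [heq]
      have h := hKMlyap.mul_mul_conjTranspose_same KM⁻¹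
      have hct : (KM⁻¹)ᴴ = KM⁻¹ := by
        have : (KM⁻¹)ᴴ = (KM⁻¹)ᵀ := by ext i j; simp [Matrix.conjTranspose_apply]
        rw [this, hKMinvsym]
      rwa [hct] at h
    have := kron_psd_aux hX.posSemidef hS
    rwa [kron_neg_right] at this
  · -- observability Gramian
    have hCBK : Cᵀ * Bᵀ * Km = Cᵀ * C := by
      rw [hC_m, Matrix.mul_assoc]
    have hKBC : Km * (B * C) = Cᵀ * C := by
      rw [← Matrix.mul_assoc, ← hKmCB]
    have hHC : (H ⊗ₖ C)ᵀ * (H ⊗ₖ C) = (Hᵀ * H) ⊗ₖ (Cᵀ * C) := by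
      rw [← Matrix.kroneckerMap_transpose, ← Matrix.mul_kronecker_mul]
    have key : ((1 : Matrix (Fin N) (Fin N) ℝ) ⊗ₖ A - D ⊗ₖ (B * C))ᵀ * (Y ⊗ₖ Km)
        + (Y ⊗ₖ Km) * ((1 : Matrix (Fin N) (Fin N) ℝ) ⊗ₖ A - D ⊗ₖ (B * C))
        + (H ⊗ₖ C)ᵀ * (H ⊗ₖ C)
        = Y ⊗ₖ (Aᵀ * Km + Km * A) - (D * Y + Y * D - Hᵀ * H) ⊗ₖ (Cᵀ * C) := by
      rw [htrans, Matrix.sub_mul, Matrix.mul_sub, hHC,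
        ← Matrix.mul_kronecker_mul, ← Matrix.mul_kronecker_mul,
        ← Matrix.mul_kronecker_mul, ← Matrix.mul_kronecker_mul,
        Matrix.one_mul, Matrix.mul_one, hCBK, hKBC,
        Matrix.kronecker_add, kron_sub_left, Matrix.add_kronecker]
      abel
    rw [key, neg_sub, sub_eq_add_neg, ← kron_neg_right]
    exact (kron_psd_aux hYineq (transpose_mul_self_psd C)).add
      (kron_psd_aux hY.posSemidef hKmlyap)
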